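/- Assume the squaring map n ↦ n² is a bijection of N onto itself, and write m^{1/2} for the unique square root of m. Then every 1-cocycle u ∈ Z¹(PSL(2,ℤ), N) is cohomologous to a cocycle v with v(σ) = 1; in fact, taking n = u(σ)^{1/2} one has n⁻¹·u(σ)·(σ•n) = 1. -/

import Mathlib

/-- A 1-cocycle of `G` in a (possibly noncommutative) group `N` on which `G`
acts on the left by group automorphisms: `u (g₁ * g₂) = u g₁ * g₁ • u g₂`. -/
def IsCocycle {G N : Type*} [Group G] [Group N] [MulDistribMulAction G N]
    (u : G → N) : Prop :=
  ∀ g₁ g₂ : G, u (g₁ * g₂) = u g₁ * g₁ • u g₂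

/-- Two maps `u v : G → N` are cohomologous if there is `n : N` with
`v g = n⁻¹ * u g * g • n` for all `g`. -/
def Cohomologous {G N : Type*} [Group G] [Group N] [MulDistribMulAction G N]
    (u v : G → N) : Prop :=
  ∃ n : N, ∀ g : G, v g = n⁻¹ * u g * g • n

/-- The group `SL(2,ℤ)`. -/
abbrev SL2Z := Matrix.SpecialLinearGroup (Fin 2) ℤ

/-- The group `PSL(2,ℤ)`, the quotient of `SL(2,ℤ)` by its center `{±1}`. -/
abbrev PSL2Z := SL2Z ⧸ Subgroup.center SL2Z

/-- The image `σ` of the matrix `((0,-1),(1,0))` in `PSL(2,ℤ)`. -/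
def pslSigma : PSL2Z :=
  QuotientGroup.mk ⟨!![0, -1; 1, 0], by norm_num [Matrix.det_fin_two_of]⟩

/-- The image `τ` of the matrix `((0,-1),(1,-1))` in `PSL(2,ℤ)`. -/
def pslTau : PSL2Z :=
  QuotientGroup.mk ⟨!![0, -1; 1, -1], by norm_num [Matrix.det_fin_two_of]⟩

theorem cohomologous_to_sigma_one {N : Type*} [Group N]
    [MulDistribMulAction PSL2Z N]
    (hsq : Function.Bijective fun n : N => n * n)
    (u : PSL2Z → N) (hu : IsCocycle u) :
    (∀ n : N, n * n = u pslSigma → n⁻¹ * u pslSigma * pslSigma • n = 1) ∧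
    ∃ v : PSL2Z → N, IsCocycle v ∧ Cohomologous u v ∧ v pslSigma = 1 := by
  have hσ : pslSigma * pslSigma = 1 := by
    obtain ⟨S, hS1, hS2⟩ : ∃ S : SL2Z, (S : Matrix (Fin 2) (Fin 2) ℤ) = !![0, -1; 1, 0] ∧ pslSigma = QuotientGroup.mk S := ⟨_, rfl, rfl⟩
    rw [hS2, ← QuotientGroup.mk_mul, QuotientGroup.eq_one_iff]
    rw [Subgroup.mem_center_iff]
    intro g
    ext i j
    simp [Matrix.SpecialLinearGroup.coe_mul, Matrix.mul_apply, Fin.sum_univ_two, hS1]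
    fin_cases i <;> fin_cases j <;> simp
  have h1 : u 1 = 1 := by
    have := hu 1 1
    simp at this
    exact this
  have hinv : pslSigma • u pslSigma = (u pslSigma)⁻¹ := by
    have := hu pslSigma pslSigma
    rw [hσ, h1] at this
    exact (inv_eq_of_mul_eq_one_right this.symm).symm
  have key : ∀ n : N, n * n = u pslSigma → n⁻¹ * u pslSigma * pslSigma • n = 1 := by
    intro n hn
    have hsn : pslSigma • n = n⁻¹ := by
      apply hsq.injective
      show pslSigma • n * pslSigma • n = n⁻¹ * n⁻¹
      rw [← smul_mul', hn, hinv, ← hn, mul_inv_rev]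
    rw [hsn, ← hn]
    group
  refine ⟨key, ?_⟩
  obtain ⟨n, hn⟩ := hsq.surjective (u pslSigma)
  refine ⟨fun g => n⁻¹ * u g * g • n, ?_, ⟨n, fun g => rfl⟩, key n hn⟩
  intro g₁ g₂
  simp only [hu g₁ g₂, smul_mul', smul_inv', mul_smul]
  group
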